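/- Node merge is validity-preserving: Let N = (L, A) be a network model and let u_1, u_2 be two distinct nodes in the same layer such that there is a bijection φ between the set of arcs directed out of u_1 and the set of arcs directed out of u_2 satisfying: for every arc a_1 out of u_1, the arc a_2 = φ(a_1) has the same head (arc-terminal) as a_1 and the same arc weight, w(a_1) = w(a_2). Let N' be the network obtained from N by deleting all arcs directed out of u_2, redirecting every arc directed into u_2 so that its head becomes u_1, and deleting u_2. Then there is a weight-preserving one-to-one correspondence between directed r–t paths of N and directed r–t paths of N'; in particular P(N') = P(N). -/

import Mathlib

open Pointwise

/-- `y` dominates `y'`: componentwise at least as large and not equal. -/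
def dominates {K : ℕ} (y y' : Fin K → ℝ) : Prop :=
  (∀ k, y' k ≤ y k) ∧ y ≠ y'

/-- The nondominated subset of `S`. -/
def ND {K : ℕ} (S : Set (Fin K → ℝ)) : Set (Fin K → ℝ) :=
  {y ∈ S | ¬ ∃ y' ∈ S, dominates y' y}

/-- `IsPath tl hd p u v`: the list of arcs `p` forms a directed walk from `u` to `v`. -/
def IsPath {V A : Type*} (tl hd : A → V) : List A → V → V → Prop
  | [], u, v => u = v
  | a :: p, u, v => tl a = u ∧ IsPath tl hd p (hd a) v

/-- Total weight of a list of arcs. -/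
def pathWeight {A : Type*} {K : ℕ} (w : A → Fin K → ℝ) (p : List A) : Fin K → ℝ :=
  (p.map w).sum

/-- A layered-acyclic network model with `n + 1` layers (indexed `1, …, n+1`),
a single root in layer `1`, a single terminal in layer `n+1`, every arc going
from one layer to the next, and `K`-dimensional arc weights. -/
structure Network (V A : Type*) (K : ℕ) where
  tl : A → V
  hd : A → V
  w : A → Fin K → ℝ
  n : ℕ
  layer : V → ℕ
  layer_pos : ∀ v, 1 ≤ layer v
  layer_le : ∀ v, layer v ≤ n + 1
  arc_step : ∀ a, layer (hd a) = layer (tl a) + 1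
  root : V
  terminal : V
  root_layer : layer root = 1
  terminal_layer : layer terminal = n + 1
  root_unique : ∀ v, layer v = 1 → v = root
  terminal_unique : ∀ v, layer v = n + 1 → v = terminal
  layer_nonempty : ∀ j, 1 ≤ j → j ≤ n + 1 → ∃ v, layer v = j

namespace Network

variable {V A : Type*} {K : ℕ}

/-- The set of directed paths from `u` to `v`. -/
def Paths (N : Network V A K) (u v : V) : Set (List A) :=
  {p | IsPath N.tl N.hd p u v}

/-- The set of weights of directed paths from `u` to `v`. -/
def weights (N : Network V A K) (u v : V) : Set (Fin K → ℝ) :=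
  pathWeight N.w '' N.Paths u v

/-- The Pareto frontier of the network. -/
def Pareto (N : Network V A K) : Set (Fin K → ℝ) :=
  ND (N.weights N.root N.terminal)

end Network

section MergeAux

variable {V A : Type*} [DecidableEq V] {K : ℕ}

/-- Translate a path of `N` into a path of the merged network. -/
def gmap (N : Network V A K) (u₁ u₂ : V) (hne : u₁ ≠ u₂)
    (φ : {a : A // N.tl a = u₁} ≃ {a : A // N.tl a = u₂}) :
    List A → List {a : A // N.tl a ≠ u₂}
  | [] => []
  | a :: p =>
      (if h : N.tl a = u₂ then ⟨(φ.symm ⟨a, h⟩).1, by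
        have := (φ.symm ⟨a, h⟩).2; rw [this]; exact hne⟩
       else ⟨a, h⟩) :: gmap N u₁ u₂ hne φ p

/-- Translate a path of the merged network into a path of `N`, given the current
vertex `u` of `N`. -/
def fmap (N : Network V A K) (u₁ u₂ : V)
    (φ : {a : A // N.tl a = u₁} ≃ {a : A // N.tl a = u₂}) :
    List {a : A // N.tl a ≠ u₂} → V → List A
  | [], _ => []
  | a :: p, u =>
      (if u = u₂ then (if h : N.tl a.1 = u₁ then (φ ⟨a.1, h⟩).1 else a.1) else a.1)
        :: fmap N u₁ u₂ φ p (N.hd a.1)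

theorem gmap_path {N : Network V A K} {u₁ u₂ : V} (hne : u₁ ≠ u₂)
    {φ : {a : A // N.tl a = u₁} ≃ {a : A // N.tl a = u₂}}
    (hφhd : ∀ a : {a : A // N.tl a = u₁}, N.hd (φ a).1 = N.hd a.1)
    {tl' hd' : {a : A // N.tl a ≠ u₂} → V}
    (htl' : ∀ a, tl' a = N.tl a.1)
    (hhd' : ∀ a, hd' a = if N.hd a.1 = u₂ then u₁ else N.hd a.1) :
    ∀ {p : List A} {u v : V}, IsPath N.tl N.hd p u v → v ≠ u₂ →
    IsPath tl' hd' (gmap N u₁ u₂ hne φ p) (if u = u₂ then u₁ else u) v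
  | [], u, v, h, hv => by
      simp only [IsPath] at h ⊢
      subst h; simp [hv, gmap, IsPath]
  | a :: p, u, v, h, hv => by
      obtain ⟨hta, hp⟩ := h
      have ih := gmap_path hne hφhd htl' hhd' (p := p) hp hv
      by_cases h2 : N.tl a = u₂
      · refine ⟨?_, ?_⟩
        · simp only [gmap, dif_pos h2]
          rw [htl', (φ.symm ⟨a, h2⟩).2, ← hta, h2]; simp
        · have hh : N.hd (φ.symm ⟨a, h2⟩).1 = N.hd a := by
            have := hφhd (φ.symm ⟨a, h2⟩); rw [Equiv.apply_symm_apply] at this; exact this.symm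
          simp only [gmap, dif_pos h2]
          rw [hhd']
          simpa [hh] using ih
      · refine ⟨?_, ?_⟩
        · simp only [gmap, dif_neg h2]
          rw [htl']; rw [hta] at h2; simp [h2, hta]
        · simp only [gmap, dif_neg h2]
          rw [hhd']
          simpa using ih

theorem fmap_path {N : Network V A K} {u₁ u₂ : V}
    {φ : {a : A // N.tl a = u₁} ≃ {a : A // N.tl a = u₂}}
    (hφhd : ∀ a : {a : A // N.tl a = u₁}, N.hd (φ a).1 = N.hd a.1)
    {tl' hd' : {a : A // N.tl a ≠ u₂} → V}
    (htl' : ∀ a, tl' a = N.tl a.1)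
    (hhd' : ∀ a, hd' a = if N.hd a.1 = u₂ then u₁ else N.hd a.1) :
    ∀ {p : List {a : A // N.tl a ≠ u₂}} {u v : V},
    IsPath tl' hd' p (if u = u₂ then u₁ else u) v → v ≠ u₁ →
    IsPath N.tl N.hd (fmap N u₁ u₂ φ p u) u v
  | [], u, v, h, hv => by
      simp only [IsPath] at h ⊢
      split at h
      · exact (hv h.symm).elim
      · exact h
  | a :: p, u, v, h, hv => by
      obtain ⟨hta, hp⟩ := h
      rw [hhd'] at hp
      have ih := fmap_path hφhd htl' hhd' (p := p) (u := N.hd a.1) hp hv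
      rw [htl'] at hta
      by_cases h2 : u = u₂
      · rw [if_pos h2] at hta
        refine ⟨?_, ?_⟩
        · simp only [fmap, if_pos h2, hta, dif_pos]
          rw [(φ ⟨a.1, hta⟩).2, h2]
        · simp only [fmap, if_pos h2, hta, dif_pos]
          rwa [hφhd ⟨a.1, hta⟩]
      · rw [if_neg h2] at hta
        exact ⟨by simp [fmap, h2, hta], by simpa [fmap, h2] using ih⟩

theorem fmap_gmap {N : Network V A K} {u₁ u₂ : V} (hne : u₁ ≠ u₂)
    {φ : {a : A // N.tl a = u₁} ≃ {a : A // N.tl a = u₂}}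
    (hφhd : ∀ a : {a : A // N.tl a = u₁}, N.hd (φ a).1 = N.hd a.1) :
    ∀ {p : List A} {u v : V}, IsPath N.tl N.hd p u v →
    fmap N u₁ u₂ φ (gmap N u₁ u₂ hne φ p) u = p
  | [], _, _, _ => rfl
  | a :: p, u, v, h => by
      obtain ⟨hta, hp⟩ := h
      have ih := fmap_gmap hne hφhd (p := p) hp
      by_cases h2 : N.tl a = u₂
      · have h1 : N.tl (φ.symm ⟨a, h2⟩).1 = u₁ := (φ.symm ⟨a, h2⟩).2
        have hh : N.hd (φ.symm ⟨a, h2⟩).1 = N.hd a := by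
          have := hφhd (φ.symm ⟨a, h2⟩); rw [Equiv.apply_symm_apply] at this; exact this.symm
        have hu : u = u₂ := hta ▸ h2
        simp only [gmap, dif_pos h2, fmap, if_pos hu, dif_pos h1]
        rw [hh, ih]
        congr 1
        have h3 : (⟨(φ.symm ⟨a, h2⟩).1, h1⟩ : {a : A // N.tl a = u₁}) = φ.symm ⟨a, h2⟩ := rfl
        rw [h3, Equiv.apply_symm_apply]
      · have hu : u ≠ u₂ := fun e => h2 (hta.trans e)
        simp only [gmap, dif_neg h2, fmap, if_neg hu]
        rw [ih]

theorem gmap_fmap {N : Network V A K} {u₁ u₂ : V} (hne : u₁ ≠ u₂)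
    {φ : {a : A // N.tl a = u₁} ≃ {a : A // N.tl a = u₂}}
    {tl' hd' : {a : A // N.tl a ≠ u₂} → V}
    (htl' : ∀ a, tl' a = N.tl a.1)
    (hhd' : ∀ a, hd' a = if N.hd a.1 = u₂ then u₁ else N.hd a.1) :
    ∀ {p : List {a : A // N.tl a ≠ u₂}} {u v : V},
    IsPath tl' hd' p (if u = u₂ then u₁ else u) v →
    gmap N u₁ u₂ hne φ (fmap N u₁ u₂ φ p u) = p
  | [], _, _, _ => rfl
  | a :: p, u, v, h => by
      obtain ⟨hta, hp⟩ := h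
      rw [hhd'] at hp
      have ih := gmap_fmap hne (φ := φ) htl' hhd' (p := p) (u := N.hd a.1) hp
      rw [htl'] at hta
      by_cases h2 : u = u₂
      · rw [if_pos h2] at hta
        have ht2 : N.tl (φ ⟨a.1, hta⟩).1 = u₂ := (φ ⟨a.1, hta⟩).2
        simp only [fmap, if_pos h2, dif_pos hta, gmap, dif_pos ht2]
        rw [ih]
        congr 1
        refine Subtype.ext ?_
        show (φ.symm ⟨(φ ⟨a.1, hta⟩).1, ht2⟩).1 = a.1
        have h3 : (⟨(φ ⟨a.1, hta⟩).1, ht2⟩ : {a : A // N.tl a = u₂}) = φ ⟨a.1, hta⟩ :=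
          Subtype.ext rfl
        rw [h3, Equiv.symm_apply_apply]
      · rw [if_neg h2] at hta
        simp only [fmap, if_neg h2, gmap, dif_neg a.2]
        rw [ih]

theorem fmap_weight {N : Network V A K} {u₁ u₂ : V}
    {φ : {a : A // N.tl a = u₁} ≃ {a : A // N.tl a = u₂}}
    (hφw : ∀ a : {a : A // N.tl a = u₁}, N.w (φ a).1 = N.w a.1)
    {w' : {a : A // N.tl a ≠ u₂} → Fin K → ℝ}
    (hw' : ∀ a, w' a = N.w a.1) :
    ∀ (p : List {a : A // N.tl a ≠ u₂}) (u : V),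
    pathWeight N.w (fmap N u₁ u₂ φ p u) = pathWeight w' p
  | [], _ => rfl
  | a :: p, u => by
      have ih := fmap_weight hφw hw' p (N.hd a.1)
      simp only [fmap, pathWeight, List.map_cons, List.sum_cons] at ih ⊢
      rw [show (p.map w').sum = ((fmap N u₁ u₂ φ p (N.hd a.1)).map N.w).sum from ih.symm]
      congr 1
      rw [hw']
      split
      · split
        · next h => exact hφw ⟨a.1, h⟩
        · rfl
      · rfl

end MergeAux

/-- **Node merge is validity-preserving.**  Let `u₁ ≠ u₂` be two nodes in the same layer
whose outgoing arcs are matched by a bijection `φ` preserving heads and weights.  Form the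
merged network by deleting the arcs out of `u₂` (keeping the arcs `{a // N.tl a ≠ u₂}`),
redirecting every arc whose head is `u₂` so that its head becomes `u₁`, and deleting `u₂`.
Then there is a weight-preserving bijection between the root–terminal paths of the merged
network and those of `N`; in particular the Pareto frontier is preserved. -/
theorem node_merge_vpo {V A : Type*} [Fintype V] [Fintype A] [DecidableEq V] {K : ℕ}
    (N : Network V A K) (u₁ u₂ : V) (hne : u₁ ≠ u₂)
    (hlayer : N.layer u₁ = N.layer u₂)
    (φ : {a : A // N.tl a = u₁} ≃ {a : A // N.tl a = u₂})
    (hφhd : ∀ a : {a : A // N.tl a = u₁}, N.hd (φ a).1 = N.hd a.1)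
    (hφw : ∀ a : {a : A // N.tl a = u₁}, N.w (φ a).1 = N.w a.1)
    (tl' hd' : {a : A // N.tl a ≠ u₂} → V) (w' : {a : A // N.tl a ≠ u₂} → Fin K → ℝ)
    (htl' : ∀ a, tl' a = N.tl a.1)
    (hhd' : ∀ a, hd' a = if N.hd a.1 = u₂ then u₁ else N.hd a.1)
    (hw' : ∀ a, w' a = N.w a.1) :
    (∃ e : {p : List {a : A // N.tl a ≠ u₂} // IsPath tl' hd' p N.root N.terminal} ≃
        {p : List A // IsPath N.tl N.hd p N.root N.terminal},
      ∀ p, pathWeight N.w (e p).1 = pathWeight w' p.1) ∧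
    ND (pathWeight w' '' {p | IsPath tl' hd' p N.root N.terminal}) = N.Pareto := by
  have hroot : N.root ≠ u₂ := by
    intro h
    apply hne
    have h1 : N.layer u₂ = 1 := h ▸ N.root_layer
    have h2 : N.layer u₁ = 1 := hlayer.trans h1
    rw [N.root_unique u₁ h2, N.root_unique u₂ h1]
  have hterm : N.terminal ≠ u₂ := by
    intro h
    apply hne
    have h1 : N.layer u₂ = N.n + 1 := h ▸ N.terminal_layer
    have h2 : N.layer u₁ = N.n + 1 := hlayer.trans h1
    rw [N.terminal_unique u₁ h2, N.terminal_unique u₂ h1]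
  have hterm1 : N.terminal ≠ u₁ := by
    intro h
    apply hne
    have h2 : N.layer u₁ = N.n + 1 := h ▸ N.terminal_layer
    have h1 : N.layer u₂ = N.n + 1 := hlayer ▸ h2
    rw [N.terminal_unique u₁ h2, N.terminal_unique u₂ h1]
  have etoFun : ∀ q : {p : List {a : A // N.tl a ≠ u₂} // IsPath tl' hd' p N.root N.terminal},
      IsPath N.tl N.hd (fmap N u₁ u₂ φ q.1 N.root) N.root N.terminal := by
    intro q
    refine fmap_path hφhd htl' hhd' ?_ hterm1
    rw [if_neg hroot]; exact q.2
  have einvFun : ∀ q : {p : List A // IsPath N.tl N.hd p N.root N.terminal},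
      IsPath tl' hd' (gmap N u₁ u₂ hne φ q.1) N.root N.terminal := by
    intro q
    have := gmap_path hne hφhd htl' hhd' q.2 hterm
    rwa [if_neg hroot] at this
  refine ⟨⟨⟨fun q => ⟨fmap N u₁ u₂ φ q.1 N.root, etoFun q⟩,
      fun q => ⟨gmap N u₁ u₂ hne φ q.1, einvFun q⟩, fun q => ?_, fun q => ?_⟩,
      fun p => fmap_weight hφw hw' p.1 N.root⟩, ?_⟩
  · ext1
    refine gmap_fmap hne (φ := φ) htl' hhd' (v := N.terminal) ?_
    rw [if_neg hroot]; exact q.2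
  · ext1
    exact fmap_gmap hne hφhd q.2
  have hset : pathWeight w' '' {p | IsPath tl' hd' p N.root N.terminal} =
      N.weights N.root N.terminal := by
    ext y
    constructor
    · rintro ⟨p, hp, rfl⟩
      refine ⟨fmap N u₁ u₂ φ p N.root, ?_, fmap_weight hφw hw' p N.root⟩
      refine fmap_path hφhd htl' hhd' ?_ hterm1
      rw [if_neg hroot]; exact hp
    · rintro ⟨p, hp, rfl⟩
      refine ⟨gmap N u₁ u₂ hne φ p, ?_, ?_⟩
      · have := gmap_path hne hφhd htl' hhd' hp hterm
        rwa [if_neg hroot] at this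
      · have h1 := fmap_weight hφw hw' (gmap N u₁ u₂ hne φ p) N.root
        rw [fmap_gmap hne hφhd hp] at h1
        exact h1.symm
  rw [Network.Pareto, hset]
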